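/- Let p and f be positive integers with f < p. Let r be the smallest positive integer such that (p−f)·(27/2)^r > p/50, and let k be the smallest integer greater than r such that (p−f)·(27/2)^r·(1.013)^{k−r} > 71·p/72. Then there is an absolute constant C > 0, independent of p and f, such that 74^{2k+1} ≤ C·(p/(p−f))^{3.31}. -/

import Mathlib

/-- Arithmetic content of the degree bound for the overlay graph `G(p,f) = L(p)^{2k+1}`:
if `r` is the smallest positive integer with `(p-f)·(27/2)^r > p/50`, and `k` is the smallest
integer greater than `r` with `(p-f)·(27/2)^r·(1.013)^{k-r} > 71·p/72`, then
`74^{2k+1} ≤ C·(p/(p-f))^{3.31}` for an absolute constant `C`. -/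
theorem stmt0 :
    ∃ C : ℝ, 0 < C ∧
      ∀ p f r k : ℕ, 0 < p → 0 < f → f < p →
        (0 < r ∧ ((p : ℝ) - f) * (27 / 2 : ℝ) ^ r > (p : ℝ) / 50 ∧
          ∀ r' : ℕ, 0 < r' → ((p : ℝ) - f) * (27 / 2 : ℝ) ^ r' > (p : ℝ) / 50 → r ≤ r') →
        (r < k ∧
          ((p : ℝ) - f) * (27 / 2 : ℝ) ^ r * (1.013 : ℝ) ^ (k - r) > 71 * (p : ℝ) / 72 ∧
          ∀ k' : ℕ, r < k' →
            ((p : ℝ) - f) * (27 / 2 : ℝ) ^ r * (1.013 : ℝ) ^ (k' - r) > 71 * (p : ℝ) / 72 →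
            k ≤ k') →
        (74 : ℝ) ^ (2 * k + 1) ≤ C * ((p : ℝ) / ((p : ℝ) - f)) ^ (3.31 : ℝ) := by
  refine ⟨(74:ℝ) ^ 623, by positivity, ?_⟩
  rintro p f r k hp hf hfp ⟨hr0, hrgt, hrmin⟩ ⟨hkr, hkgt, hkmin⟩
  have hp0 : (0:ℝ) < p := by exact_mod_cast hp
  have hfpR : (f:ℝ) < p := by exact_mod_cast hfp
  have ha0 : (0:ℝ) < (p:ℝ) - f := by linarith
  have hap : (p:ℝ) - f ≤ p := by
    have : (0:ℝ) ≤ f := by positivity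
    linarith
  -- (A) : (27/2)^(r-1) ≤ p/(p-f)
  have hA : (27/2:ℝ) ^ (r - 1) ≤ (p:ℝ) / ((p:ℝ) - f) := by
    rcases Nat.lt_or_ge r 2 with hr1 | hr2
    · have : r = 1 := by omega
      subst this
      simpa using (one_le_div ha0).mpr hap
    · have hnot : ¬ (((p:ℝ) - f) * (27/2:ℝ) ^ (r - 1) > (p:ℝ) / 50) := by
        intro h
        have := hrmin (r - 1) (by omega) h
        omega
      push_neg at hnot
      rw [le_div_iff₀ ha0]
      nlinarith
  -- (B) : 1.013^(k-r-1) ≤ 50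
  have hB : (1.013:ℝ) ^ (k - r - 1) ≤ 50 := by
    rcases Nat.lt_or_ge k (r + 2) with hk1 | hk2
    · have : k - r - 1 = 0 := by omega
      rw [this]; norm_num
    · have hnot : ¬ (((p:ℝ) - f) * (27/2:ℝ) ^ r * (1.013:ℝ) ^ ((k-1) - r)
          > 71 * (p:ℝ) / 72) := by
        intro h
        have := hkmin (k - 1) (by omega) h
        omega
      push_neg at hnot
      have hsub : (k - 1) - r = k - r - 1 := by omega
      rw [hsub] at hnot
      have hq0 : (0:ℝ) ≤ (1.013:ℝ) ^ (k - r - 1) := by positivity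
      nlinarith [mul_le_mul_of_nonneg_right (le_of_lt hrgt) hq0]
  -- hence k - r - 1 < 310
  have h310 : (50:ℝ) < (1.013:ℝ) ^ 310 := by
    rw [show (310:ℕ) = 155 * 2 from rfl, pow_mul]; norm_num
  have hklt : k - r - 1 < 310 := by
    by_contra h
    push_neg at h
    have : (1.013:ℝ) ^ 310 ≤ (1.013:ℝ) ^ (k - r - 1) :=
      pow_le_pow_right₀ (by norm_num) h
    exact lt_irrefl _ (h310.trans_le (this.trans hB))
  have hexp : 2 * k + 1 ≤ 2 * (r - 1) + 623 := by omega
  have key1 : (74:ℝ) ^ (2 * k + 1) ≤ (74:ℝ) ^ (2 * (r - 1) + 623) :=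
    pow_le_pow_right₀ (by norm_num) hexp
  have key2 : (74:ℝ) ^ (2 * (r - 1) + 623) = (74:ℝ) ^ 623 * ((74:ℝ) ^ 2) ^ (r - 1) := by
    rw [pow_add, pow_mul]; ring
  -- base comparison : 74^2 ≤ (27/2)^(3.31)
  have hbase : (74:ℝ) ^ 2 ≤ (27/2:ℝ) ^ (3.31:ℝ) := by
    have h100 : ((74:ℝ) ^ 2) ^ (100:ℕ) ≤ ((27/2:ℝ) ^ (3.31:ℝ)) ^ (100:ℕ) := by
      rw [← Real.rpow_natCast ((27/2:ℝ) ^ (3.31:ℝ)) 100,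
        ← Real.rpow_mul (by norm_num)]
      rw [show ((3.31:ℝ) * (100:ℕ)) = ((331:ℕ):ℝ) by norm_num, Real.rpow_natCast]
      rw [show (331:ℕ) = 165 * 2 + 1 from rfl, pow_succ (27/2:ℝ), pow_mul (27/2:ℝ)]
      norm_num
    exact le_of_pow_le_pow_left₀ (by norm_num) (by positivity) h100
  have key3 : ((74:ℝ) ^ 2) ^ (r - 1) ≤ ((p:ℝ) / ((p:ℝ) - f)) ^ (3.31:ℝ) :=
    calc ((74:ℝ) ^ 2) ^ (r - 1) ≤ ((27/2:ℝ) ^ (3.31:ℝ)) ^ (r - 1) :=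
          pow_le_pow_left₀ (by positivity) hbase _
      _ = ((27/2:ℝ) ^ (r - 1)) ^ (3.31:ℝ) := by
          rw [← Real.rpow_natCast ((27/2:ℝ) ^ (3.31:ℝ)) (r - 1),
            ← Real.rpow_mul (by norm_num), mul_comm,
            Real.rpow_mul (by norm_num), Real.rpow_natCast]
      _ ≤ ((p:ℝ) / ((p:ℝ) - f)) ^ (3.31:ℝ) :=
          Real.rpow_le_rpow (by positivity) hA (by norm_num)
  calc (74:ℝ) ^ (2 * k + 1) ≤ (74:ℝ) ^ 623 * ((74:ℝ) ^ 2) ^ (r - 1) := by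
        rw [← key2]; exact key1
    _ ≤ (74:ℝ) ^ 623 * ((p:ℝ) / ((p:ℝ) - f)) ^ (3.31:ℝ) := by
        exact mul_le_mul_of_nonneg_left key3 (by positivity)
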